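/- Let f : 2^N → ℝ be a non-negative submodular set function on a finite set N with extended multilinear extension F, let y ∈ [0,1]^(2^N), and let S, T ⊆ N be disjoint sets. Then the function t ↦ F(y + t · (χ_S − χ_T)) is convex on the set {t ∈ ℝ : 0 ≤ y_S + t ≤ 1 and 0 ≤ y_T − t ≤ 1}; that is, F is convex along any line of direction d = χ_S − χ_T. -/
import Mathlib

open scoped Classical

/-- A matroid on a finite ground set, given by its independent sets. -/
structure FinMatroid (α : Type*) [Fintype α] [DecidableEq α] where
  Indep : Finset α → Prop
  indep_empty : Indep ∅
  indep_subset : ∀ ⦃S T : Finset α⦄, Indep T → S ⊆ T → Indep S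
  indep_exchange : ∀ ⦃S T : Finset α⦄, Indep S → Indep T → S.card < T.card →
    ∃ u ∈ T \ S, Indep (insert u S)

variable {α : Type*} [Fintype α] [DecidableEq α]

/-- The rank of a set `A`: the maximum size of an independent subset of `A`. -/
noncomputable def FinMatroid.rank (M : FinMatroid α) (A : Finset α) : ℕ :=
  (A.powerset.filter fun S => M.Indep S).sup Finset.card

/-- A base of a matroid: an inclusion-wise maximal independent set. -/
def FinMatroid.IsBase (M : FinMatroid α) (B : Finset α) : Prop :=
  M.Indep B ∧ ∀ T : Finset α, M.Indep T → B ⊆ T → T = B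

/-- The extended multilinear extension of a set function `f`, evaluated at a
vector `y` with one coordinate for each subset of the ground set. -/
noncomputable def extMulti (f : Finset α → ℝ) (y : Finset α → ℝ) : ℝ :=
  ∑ J : Finset (Finset α), f (J.sup id) * ((∏ S ∈ J, y S) * ∏ S ∈ Jᶜ, (1 - y S))

/-- The standard multilinear extension of a set function `f`. -/
noncomputable def stdMulti (f : Finset α → ℝ) (x : α → ℝ) : ℝ :=
  ∑ S : Finset α, f S * ((∏ u ∈ S, x u) * ∏ u ∈ Sᶜ, (1 - x u))

/-- The marginal vector of `y`: `marg y u = 1 - ∏_{S ∋ u} (1 - y S)`. -/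
noncomputable def marg (y : Finset α → ℝ) (u : α) : ℝ :=
  1 - ∏ S ∈ Finset.univ.filter (fun S : Finset α => u ∈ S), (1 - y S)

/-- The characteristic vector of the coordinate indexed by the set `A`. -/
def chi (A : Finset α) : Finset α → ℝ := fun S => if S = A then 1 else 0

/-- The coordinate-wise probabilistic sum of two vectors. -/
def psum {ι : Type*} (a b : ι → ℝ) : ι → ℝ := fun i => 1 - (1 - a i) * (1 - b i)

/-- Membership of `x` in the matroid polytope `P(M)`. -/
def inMatroidPolytope (M : FinMatroid α) (x : α → ℝ) : Prop :=
  (∀ u, 0 ≤ x u) ∧ ∀ A : Finset α, ∑ u ∈ A, x u ≤ (M.rank A : ℝ)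

section AuxConvex

variable {β : Type*} [DecidableEq β]

/-- extract two elements from a product -/
lemma prod_extract2 {M : Type*} [CommMonoid M] (J : Finset β) (g : β → M) (s t : β)
    (hst : s ≠ t) :
    ∏ A ∈ J, g A =
      (if s ∈ J then g s else 1) * ((if t ∈ J then g t else 1) *
        ∏ A ∈ (J.erase s).erase t, g A) := by
  by_cases hs : s ∈ J <;> by_cases ht : t ∈ J
  · have ht' : t ∈ J.erase s := Finset.mem_erase.2 ⟨fun h => hst h.symm, ht⟩
    rw [if_pos hs, if_pos ht, Finset.mul_prod_erase _ _ ht',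
      Finset.mul_prod_erase _ _ hs]
  · have ht' : t ∉ J.erase s := fun h => ht (Finset.mem_of_mem_erase h)
    rw [if_pos hs, if_neg ht, one_mul, Finset.erase_eq_of_notMem ht',
      Finset.mul_prod_erase _ _ hs]
  · have ht' : t ∈ J.erase s := Finset.mem_erase.2 ⟨fun h => hst h.symm, ht⟩
    rw [if_neg hs, if_pos ht, one_mul, Finset.erase_eq_of_notMem hs,
      Finset.mul_prod_erase _ _ ht]
  · rw [if_neg hs, if_neg ht, one_mul, one_mul, Finset.erase_eq_of_notMem hs,
      Finset.erase_eq_of_notMem ht]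

end AuxConvex

/-- sign coefficient for S -/
noncomputable def cvxES (S : Finset α) (J : Finset (Finset α)) : ℝ :=
  if S ∈ J then 1 else -1

/-- sign coefficient for T -/
noncomputable def cvxET (T : Finset α) (J : Finset (Finset α)) : ℝ :=
  if T ∈ J then -1 else 1

/-- constant coefficient for S -/
noncomputable def cvxPS (y : Finset α → ℝ) (S : Finset α) (J : Finset (Finset α)) : ℝ :=
  if S ∈ J then y S else 1 - y S

/-- constant coefficient for T -/
noncomputable def cvxPT (y : Finset α → ℝ) (T : Finset α) (J : Finset (Finset α)) : ℝ :=
  if T ∈ J then y T else 1 - y T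

/-- the part of the product weight not depending on coordinates S, T -/
noncomputable def cvxC (y : Finset α → ℝ) (S T : Finset α) (J : Finset (Finset α)) : ℝ :=
  (∏ A ∈ (J.erase S).erase T, y A) * ∏ A ∈ ((Jᶜ).erase S).erase T, (1 - y A)

lemma cvx_factor (y : Finset α → ℝ) (S T : Finset α) (hne : S ≠ T) (t : ℝ)
    (J : Finset (Finset α)) :
    (∏ A ∈ J, (y A + t * (chi S A - chi T A))) *
      ∏ A ∈ Jᶜ, (1 - (y A + t * (chi S A - chi T A))) =
    (cvxES S J * t + cvxPS y S J) * ((cvxET T J * t + cvxPT y T J) * cvxC y S T J) := by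
  have key1 : ∏ A ∈ (J.erase S).erase T, (y A + t * (chi S A - chi T A)) =
      ∏ A ∈ (J.erase S).erase T, y A := by
    refine Finset.prod_congr rfl fun A hA => ?_
    simp only [Finset.mem_erase] at hA
    simp [chi, hA.1, hA.2.1]
  have key2 : ∏ A ∈ ((Jᶜ).erase S).erase T, (1 - (y A + t * (chi S A - chi T A))) =
      ∏ A ∈ ((Jᶜ).erase S).erase T, (1 - y A) := by
    refine Finset.prod_congr rfl fun A hA => ?_
    simp only [Finset.mem_erase] at hA
    simp [chi, hA.1, hA.2.1]
  rw [prod_extract2 J _ S T hne, prod_extract2 Jᶜ _ S T hne, key1, key2]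
  unfold cvxES cvxET cvxPS cvxPT cvxC
  by_cases hS : S ∈ J <;> by_cases hT : T ∈ J <;>
    simp [hS, hT, chi, hne, Ne.symm hne] <;> ring

lemma cvx_quadratic (f : Finset α → ℝ) (y : Finset α → ℝ) (S T : Finset α) (hne : S ≠ T)
    (t : ℝ) :
    extMulti f (fun A => y A + t * (chi S A - chi T A)) =
      (∑ J : Finset (Finset α),
        f (J.sup id) * (cvxES S J * cvxET T J * cvxC y S T J)) * t ^ 2 +
      ((∑ J : Finset (Finset α),
        f (J.sup id) * ((cvxES S J * cvxPT y T J + cvxET T J * cvxPS y S J) * cvxC y S T J)) * t +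
      ∑ J : Finset (Finset α),
        f (J.sup id) * (cvxPS y S J * cvxPT y T J * cvxC y S T J)) := by
  unfold extMulti
  rw [Finset.sum_mul, Finset.sum_mul, ← Finset.sum_add_distrib, ← Finset.sum_add_distrib]
  refine Finset.sum_congr rfl fun J _ => ?_
  rw [cvx_factor y S T hne t J]
  ring

lemma cvx_coeff_nonneg (f : Finset α → ℝ)
    (hf_submod : ∀ S T : Finset α, f (S ∪ T) + f (S ∩ T) ≤ f S + f T)
    (y : Finset α → ℝ) (hy : ∀ A, 0 ≤ y A ∧ y A ≤ 1)
    (S T : Finset α) (hST : Disjoint S T) (hne : S ≠ T) :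
    0 ≤ ∑ J : Finset (Finset α), f (J.sup id) * (cvxES S J * cvxET T J * cvxC y S T J) := by
  rw [← Finset.sum_fiberwise Finset.univ (fun J : Finset (Finset α) => (J.erase S).erase T)
    (fun J => f (J.sup id) * (cvxES S J * cvxET T J * cvxC y S T J))]
  refine Finset.sum_nonneg fun K _ => ?_
  by_cases hK : S ∈ K ∨ T ∈ K
  · have : (Finset.univ.filter
        fun J : Finset (Finset α) => (J.erase S).erase T = K) = ∅ := by
      refine Finset.filter_eq_empty_iff.2 fun J _ h => ?_
      rcases hK with hK | hK
      · rw [← h] at hK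
        exact (Finset.mem_erase.1 (Finset.mem_of_mem_erase hK)).1 rfl
      · rw [← h] at hK
        exact (Finset.mem_erase.1 hK).1 rfl
    rw [this, Finset.sum_empty]
  · push_neg at hK
    obtain ⟨hSK, hTK⟩ := hK
    have hSTK : S ∉ insert T K := by
      simp only [Finset.mem_insert]
      push_neg
      exact ⟨hne, hSK⟩
    have hTSK : T ∉ insert S K := by
      simp only [Finset.mem_insert]
      push_neg
      exact ⟨hne.symm, hTK⟩
    -- identify the fiber
    have e1 : (K.erase S).erase T = K := by
      rw [Finset.erase_eq_of_notMem hSK, Finset.erase_eq_of_notMem hTK]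
    have e2 : ((insert S K).erase S).erase T = K := by
      rw [Finset.erase_insert hSK, Finset.erase_eq_of_notMem hTK]
    have e3 : ((insert T K).erase S).erase T = K := by
      rw [Finset.erase_eq_of_notMem hSTK, Finset.erase_insert hTK]
    have e4 : ((insert S (insert T K)).erase S).erase T = K := by
      rw [Finset.erase_insert hSTK, Finset.erase_insert hTK]
    have hfib : (Finset.univ.filter
        fun J : Finset (Finset α) => (J.erase S).erase T = K) =
        {K, insert S K, insert T K, insert S (insert T K)} := by
      ext J
      simp only [Finset.mem_filter, Finset.mem_univ, true_and, Finset.mem_insert,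
        Finset.mem_singleton]
      constructor
      · intro h
        by_cases hS : S ∈ J <;> by_cases hT : T ∈ J
        · right; right; right
          have hT' : T ∈ J.erase S := Finset.mem_erase.2 ⟨hne.symm, hT⟩
          rw [← h, Finset.insert_erase hT', Finset.insert_erase hS]
        · right; left
          have hT' : T ∉ J.erase S := fun hh => hT (Finset.mem_of_mem_erase hh)
          rw [← h, Finset.erase_eq_of_notMem hT', Finset.insert_erase hS]
        · right; right; left
          have hT' : T ∈ J.erase S := Finset.mem_erase.2 ⟨hne.symm, hT⟩
          rw [← h, Finset.insert_erase hT', Finset.erase_eq_of_notMem hS]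
        · left
          have hT' : T ∉ J.erase S := fun hh => hT (Finset.mem_of_mem_erase hh)
          rw [← h, Finset.erase_eq_of_notMem hT', Finset.erase_eq_of_notMem hS]
      · rintro (rfl | rfl | rfl | rfl)
        exacts [e1, e2, e3, e4]
    rw [hfib]
    -- distinctness
    have d1 : K ∉ ({insert S K, insert T K, insert S (insert T K)} :
        Finset (Finset (Finset α))) := by
      simp only [Finset.mem_insert, Finset.mem_singleton]
      push_neg
      refine ⟨?_, ?_, ?_⟩
      · intro h; exact hSK (by rw [h]; exact Finset.mem_insert_self S K)
      · intro h; exact hTK (by rw [h]; exact Finset.mem_insert_self T K)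
      · intro h; exact hSK (by rw [h]; exact Finset.mem_insert_self S (insert T K))
    have d2 : insert S K ∉ ({insert T K, insert S (insert T K)} :
        Finset (Finset (Finset α))) := by
      simp only [Finset.mem_insert, Finset.mem_singleton]
      push_neg
      constructor
      · intro h
        exact hTSK (by rw [h]; exact Finset.mem_insert_self T K)
      · intro h
        refine hTSK ?_
        rw [h]
        exact Finset.mem_insert_of_mem (Finset.mem_insert_self T K)
    have d3 : insert T K ∉ ({insert S (insert T K)} : Finset (Finset (Finset α))) := by
      simp only [Finset.mem_singleton]
      intro h
      exact hSTK (by rw [h]; exact Finset.mem_insert_self S (insert T K))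
    rw [Finset.sum_insert d1, Finset.sum_insert d2, Finset.sum_insert d3,
      Finset.sum_singleton]
    -- compute C values
    have hCc1 : ((insert S K)ᶜ.erase S).erase T = (Kᶜ.erase S).erase T := by
      rw [Finset.compl_insert, Finset.erase_idem]
    have hCc2 : ((insert T K)ᶜ.erase S).erase T = (Kᶜ.erase S).erase T := by
      rw [Finset.compl_insert, Finset.erase_right_comm, Finset.erase_idem,
        Finset.erase_right_comm]
    have hCc3 : ((insert S (insert T K))ᶜ.erase S).erase T = (Kᶜ.erase S).erase T := by
      rw [Finset.compl_insert, Finset.compl_insert, Finset.erase_idem,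
        Finset.erase_right_comm, Finset.erase_idem, Finset.erase_right_comm]
    have hC1 : cvxC y S T (insert S K) = cvxC y S T K := by
      unfold cvxC; rw [e2, e1, hCc1]
    have hC2 : cvxC y S T (insert T K) = cvxC y S T K := by
      unfold cvxC; rw [e3, e1, hCc2]
    have hC3 : cvxC y S T (insert S (insert T K)) = cvxC y S T K := by
      unfold cvxC; rw [e4, e1, hCc3]
    -- sign values
    have hES0 : cvxES S K = -1 := if_neg hSK
    have hET0 : cvxET T K = 1 := if_neg hTK
    have hES1 : cvxES S (insert S K) = 1 := if_pos (Finset.mem_insert_self S K)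
    have hET1 : cvxET T (insert S K) = 1 := if_neg hTSK
    have hES2 : cvxES S (insert T K) = -1 := if_neg hSTK
    have hET2 : cvxET T (insert T K) = -1 := if_pos (Finset.mem_insert_self T K)
    have hES3 : cvxES S (insert S (insert T K)) = 1 :=
      if_pos (Finset.mem_insert_self S (insert T K))
    have hET3 : cvxET T (insert S (insert T K)) = -1 :=
      if_pos (Finset.mem_insert_of_mem (Finset.mem_insert_self T K))
    -- sup values
    have hsup1 : (insert S K).sup id = S ∪ K.sup id := by
      rw [Finset.sup_insert]; rfl
    have hsup2 : (insert T K).sup id = T ∪ K.sup id := by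
      rw [Finset.sup_insert]; rfl
    have hsup3 : (insert S (insert T K)).sup id = S ∪ (T ∪ K.sup id) := by
      rw [Finset.sup_insert, Finset.sup_insert]; rfl
    rw [hC1, hC2, hC3, hES0, hET0, hES1, hET1, hES2, hET2, hES3, hET3,
      hsup1, hsup2, hsup3]
    have hC : 0 ≤ cvxC y S T K := by
      unfold cvxC
      refine mul_nonneg (Finset.prod_nonneg fun A _ => (hy A).1)
        (Finset.prod_nonneg fun A _ => ?_)
      linarith [(hy A).2]
    have hsub : f (S ∪ (T ∪ K.sup id)) + f (K.sup id) ≤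
        f (S ∪ K.sup id) + f (T ∪ K.sup id) := by
      have h := hf_submod (S ∪ K.sup id) (T ∪ K.sup id)
      have hu : (S ∪ K.sup id) ∪ (T ∪ K.sup id) = S ∪ (T ∪ K.sup id) := by
        rw [Finset.union_comm T (K.sup id), ← Finset.union_assoc, Finset.union_assoc S,
          Finset.union_self, Finset.union_assoc, Finset.union_comm (K.sup id) T,
          ← Finset.union_assoc, Finset.union_assoc]
      have hi : (S ∪ K.sup id) ∩ (T ∪ K.sup id) = K.sup id := by
        rw [← Finset.inter_union_distrib_right,
          Finset.disjoint_iff_inter_eq_empty.mp hST, Finset.empty_union]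
      rw [hu, hi] at h
      linarith
    nlinarith [mul_nonneg hC (by linarith :
      (0:ℝ) ≤ f (S ∪ K.sup id) + f (T ∪ K.sup id) - f (K.sup id) - f (S ∪ (T ∪ K.sup id)))]

theorem extMulti_convex_along_direction (f : Finset α → ℝ)
    (hf_nonneg : ∀ S, 0 ≤ f S)
    (hf_submod : ∀ S T : Finset α, f (S ∪ T) + f (S ∩ T) ≤ f S + f T)
    (y : Finset α → ℝ) (hy : ∀ A, 0 ≤ y A ∧ y A ≤ 1)
    (S T : Finset α) (hST : Disjoint S T) :
    ConvexOn ℝ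
      {t : ℝ | (0 ≤ y S + t ∧ y S + t ≤ 1) ∧ (0 ≤ y T - t ∧ y T - t ≤ 1)}
      (fun t => extMulti f (fun A => y A + t * (chi S A - chi T A))) := by
  have hconv : Convex ℝ {t : ℝ | (0 ≤ y S + t ∧ y S + t ≤ 1) ∧
      (0 ≤ y T - t ∧ y T - t ≤ 1)} := by
    intro u hu v hv a b ha hb hab
    simp only [Set.mem_setOf_eq, smul_eq_mul] at *
    obtain ⟨⟨h1, h2⟩, h3, h4⟩ := hu
    obtain ⟨⟨h5, h6⟩, h7, h8⟩ := hv
    have hb' : b = 1 - a := by linarith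
    subst hb'
    refine ⟨⟨?_, ?_⟩, ?_, ?_⟩
    · nlinarith [mul_nonneg ha h1, mul_nonneg hb h5]
    · nlinarith [mul_le_mul_of_nonneg_left h2 ha, mul_le_mul_of_nonneg_left h6 hb]
    · nlinarith [mul_nonneg ha h3, mul_nonneg hb h7]
    · nlinarith [mul_le_mul_of_nonneg_left h4 ha, mul_le_mul_of_nonneg_left h8 hb]
  by_cases hne : S = T
  · subst hne
    have heq : (fun t => extMulti f (fun A => y A + t * (chi S A - chi S A))) =
        fun _ => extMulti f y := by
      funext t
      congr 1
      funext A
      ring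
    rw [heq]
    exact convexOn_const _ hconv
  · refine ⟨hconv, fun u _ v _ a b ha hb hab => ?_⟩
    simp only [smul_eq_mul]
    rw [cvx_quadratic f y S T hne, cvx_quadratic f y S T hne, cvx_quadratic f y S T hne]
    have hA := cvx_coeff_nonneg f hf_submod y hy S T hST hne
    have hb' : b = 1 - a := by linarith
    subst hb'
    nlinarith [mul_nonneg (mul_nonneg (mul_nonneg hA ha) hb) (sq_nonneg (u - v))]
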